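/- Let B be a block configuration of length n in 𝔽₂^d and φ : 𝔽₂^d → 𝔽₂^{d̄} a linear map. Given an inequality Σ_{i=1}^n Σ_{ω̄ ∈ φ(B(i))} ā^i_{ω̄} x̄^i_{ω̄} ≥ β valid for CTP[φ(B)], its φ-lifting is the inequality Σ_{i=1}^n Σ_{ω ∈ B(i)} ā^i_{φ(ω)} x^i_ω ≥ β in ℝ^B. Then the φ-lifting of any LOS inequality for CTP[φ(B)] (associated with some nonzero η̄ ∈ 𝔽₂^{d̄} and odd I ⊆ [n]) is either itself a LOS inequality for CTP[B] (i.e., it coincides with the LOS inequality associated with some nonzero η ∈ 𝔽₂^d and the same I), or it is satisfied by every point of the transversal polytope TP[B]. -/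
import Mathlib


open scoped Classical

/-- The field `𝔽₂^d`, represented as functions `Fin d → ZMod 2`. -/
abbrev F2 (d : ℕ) : Type := Fin d → ZMod 2

/-- A cyclic transversal of a block configuration `B`. -/
def IsCyclicTransversal {d n : ℕ} (B : Fin n → Set (F2 d)) (ξ : Fin n → F2 d) : Prop :=
  (∀ i, ξ i ∈ B i) ∧ (∑ i, ξ i) = 0

/-- The incidence vector of a transversal. -/
noncomputable def incVec {d n : ℕ} (ξ : Fin n → F2 d) : Fin n → F2 d → ℝ :=
  fun i ω => if ξ i = ω then 1 else 0

/-- The cyclic transversal polytope of a block configuration. -/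
noncomputable def CTP {d n : ℕ} (B : Fin n → Set (F2 d)) : Set (Fin n → F2 d → ℝ) :=
  convexHull ℝ (incVec '' { ξ | IsCyclicTransversal B ξ })

/-- The transversal polytope of a block configuration. -/
def TP {d n : ℕ} (B : Fin n → Set (F2 d)) : Set (Fin n → F2 d → ℝ) :=
  { x | (∀ i ω, 0 ≤ x i ω) ∧ (∀ i ω, ω ∉ B i → x i ω = 0) ∧ ∀ i, (∑ ω : F2 d, x i ω) = 1 }

/-- The size of a block configuration. -/
noncomputable def blockSize {d n : ℕ} (B : Fin n → Set (F2 d)) : ℕ := ∑ i, (B i).ncard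

/-- The rank of a block configuration. -/
noncomputable def blockRank {d n : ℕ} (B : Fin n → Set (F2 d)) : ℕ :=
  Module.finrank (ZMod 2) (Submodule.span (ZMod 2) (⋃ i, B i))

/-- Two sets of real vectors are affinely isomorphic. -/
def AffIso {α β : Type*} [AddCommGroup α] [Module ℝ α] [AddCommGroup β] [Module ℝ β]
    (P : Set α) (Q : Set β) : Prop :=
  ∃ f : α →ᵃ[ℝ] β, Set.InjOn f P ∧ f '' P = Q

/-- The left-hand side of the lifted odd-set (LOS) inequality associated with `η` and `I`. -/
noncomputable def losLHS {d n : ℕ} (B : Fin n → Set (F2 d)) (η : F2 d) (I : Finset (Fin n))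
    (x : Fin n → F2 d → ℝ) : ℝ :=
  (∑ i ∈ I, ∑ ω ∈ Finset.univ.filter (fun ω : F2 d => ω ∈ B i ∧ (∑ j, η j * ω j) = 0), x i ω) +
  (∑ i ∈ Iᶜ, ∑ ω ∈ Finset.univ.filter (fun ω : F2 d => ω ∈ B i ∧ (∑ j, η j * ω j) = 1), x i ω)

/-- The left-hand side of the `φ`-lifting of the LOS inequality for `CTP[φ(B)]` associated
with `η'` and `I`: the coefficient of `x^i_ω` (for `ω ∈ B(i)`) is the LOS coefficient of
`x̄^i_{φ(ω)}`. -/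
noncomputable def liftLOS {d d' n : ℕ} (B : Fin n → Set (F2 d)) (φ : F2 d →ₗ[ZMod 2] F2 d')
    (η' : F2 d') (I : Finset (Fin n)) (x : Fin n → F2 d → ℝ) : ℝ :=
  (∑ i ∈ I, ∑ ω ∈ Finset.univ.filter
      (fun ω : F2 d => ω ∈ B i ∧ (∑ j, η' j * φ ω j) = 0), x i ω) +
  (∑ i ∈ Iᶜ, ∑ ω ∈ Finset.univ.filter
      (fun ω : F2 d => ω ∈ B i ∧ (∑ j, η' j * φ ω j) = 1), x i ω)

/-- the `φ`-lifting of a LOS inequality for `CTP[φ(B)]` is either a LOS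
inequality for `CTP[B]` or valid on all of `TP[B]`. -/
theorem statement11 (d d' n : ℕ) (hn : 2 ≤ n) (B : Fin n → Set (F2 d))
    (hB : ∀ i, (B i).Nonempty) (φ : F2 d →ₗ[ZMod 2] F2 d')
    (η' : F2 d') (hη' : η' ≠ 0) (I : Finset (Fin n)) (hI : Odd I.card) :
    (∃ η : F2 d, η ≠ 0 ∧ ∀ x : Fin n → F2 d → ℝ, liftLOS B φ η' I x = losLHS B η I x) ∨
    (∀ x ∈ TP B, 1 ≤ liftLOS B φ η' I x) := by
  classical
  set η : F2 d := fun j => ∑ k, η' k * φ (Pi.single j 1) k with hηdef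
  have key : ∀ ω : F2 d, (∑ k, η' k * φ ω k) = ∑ j, η j * ω j := by
    intro ω
    have hω : ω = ∑ j, ω j • Pi.single j (1 : ZMod 2) := by
      ext j
      simp [Pi.single_apply, Finset.sum_apply, eq_comm]
    calc (∑ k, η' k * φ ω k)
        = ∑ k, η' k * (∑ j, ω j * φ (Pi.single j 1) k) := by
          congr 1; ext k
          conv_lhs => rw [hω]
          rw [map_sum]
          simp [Finset.sum_apply, map_smul]
      _ = ∑ k, ∑ j, η' k * (ω j * φ (Pi.single j 1) k) := by
          simp [Finset.mul_sum]
      _ = ∑ j, ∑ k, η' k * (ω j * φ (Pi.single j 1) k) := Finset.sum_comm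
      _ = ∑ j, η j * ω j := by
          congr 1; ext j
          rw [hηdef, Finset.sum_mul]
          congr 1; ext k; ring
  by_cases hη : η = 0
  · right
    intro x hx
    obtain ⟨hx0, hxB, hx1⟩ := hx
    have key0 : ∀ ω : F2 d, (∑ k, η' k * φ ω k) = 0 := by
      intro ω; rw [key ω, hη]; simp
    have hlift : liftLOS B φ η' I x = ∑ i ∈ I, ∑ ω ∈ Finset.univ.filter
        (fun ω : F2 d => ω ∈ B i), x i ω := by
      unfold liftLOS
      have h2 : ∀ i ∈ Iᶜ, (∑ ω ∈ Finset.univ.filter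
          (fun ω : F2 d => ω ∈ B i ∧ (∑ j, η' j * φ ω j) = 1), x i ω) = 0 := by
        intro i _
        apply Finset.sum_eq_zero
        intro ω hω
        simp only [Finset.mem_filter] at hω
        rw [key0 ω] at hω
        exact absurd hω.2.2.symm one_ne_zero
      rw [Finset.sum_eq_zero h2, add_zero]
      congr 1; ext i
      congr 1; ext ω
      simp [key0 ω]
    have hOne : ∀ i, (∑ ω ∈ Finset.univ.filter (fun ω : F2 d => ω ∈ B i), x i ω) = 1 := by
      intro i
      rw [← hx1 i, Finset.sum_filter]
      congr 1; ext ω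
      by_cases h : ω ∈ B i
      · simp [h]
      · simp [h, hxB i ω h]
    rw [hlift, Finset.sum_congr rfl (fun i _ => hOne i), Finset.sum_const, nsmul_eq_mul, mul_one]
    exact_mod_cast hI.pos
  · left
    refine ⟨η, hη, fun x => ?_⟩
    unfold liftLOS losLHS
    congr 1
    · congr 1; ext i; congr 1; ext ω; simp [key ω]
    · congr 1; ext i; congr 1; ext ω; simp [key ω]
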